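/- Let K be an algebraically closed field, s ≥ 1, m ≥ 1, q ∈ K* of order m, and h_1, …, h_s positive divisors of m with k_i = m/h_i. Given α_1,…,α_s, β_1,…,β_s ∈ K*, the K-vector space M with basis e(a_1,…,a_s), a_i ∈ ℤ/k_iℤ, admits a module structure over the tensor product A_{q^{h_1}} ⊗ ⋯ ⊗ A_{q^{h_s}} of rank-2 quantum tori via e(a)·X_i = α_i e(a_1,…,a_i+1,…,a_s) and e(a)·Y_i = α_i^{-1}β_i (q^{h_i})^{a_i−1} e(a_1,…,a_i−1,…,a_s), i.e., these operators satisfy X_iY_i = q^{h_i}Y_iX_i and all other pairs of operators commute. -/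

import Mathlib

/-- The standard basis vector `e a` of the `K`-vector space with basis indexed by
`∏ i, ℤ/(k i)ℤ`. -/
def e (K : Type*) [Field K] {s : ℕ} (k : Fin s → ℕ) (a : ∀ i, ZMod (k i)) :
    (∀ i, ZMod (k i)) → K := Pi.single a 1

/-- The multiparameter action formulas make the `K`-space with basis
`e a`, `a ∈ ∏ i, ℤ/k_iℤ`, into a module over the tensor product
`A_{q^{h_1}} ⊗ ⋯ ⊗ A_{q^{h_s}}` of rank-2 quantum tori: `X_i Y_i = q^{h_i} Y_i X_i`,
all other pairs of operators commute, and all operators act invertibly. -/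
theorem stmt_12 {K : Type*} [Field K] [IsAlgClosed K] (s m : ℕ) (hs : 1 ≤ s)
    (hm : 0 < m) (q : Kˣ) (hq : orderOf q = m)
    (h k : Fin s → ℕ) (hh : ∀ i, 0 < h i) (hdvd : ∀ i, h i ∣ m)
    (hk : ∀ i, k i = m / h i)
    (α β : Fin s → K) (hα : ∀ i, α i ≠ 0) (hβ : ∀ i, β i ≠ 0)
    (X Y : Fin s → ((∀ i, ZMod (k i)) → K) →ₗ[K] ((∀ i, ZMod (k i)) → K))
    (hX : ∀ (i : Fin s) (a : ∀ i, ZMod (k i)),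
      X i (e K k a) = α i • e K k (Function.update a i (a i + 1)))
    (hY : ∀ (i : Fin s) (a : ∀ i, ZMod (k i)),
      Y i (e K k a) = ((α i)⁻¹ * β i * ((q : K) ^ h i) ^ (a i - 1).val) •
        e K k (Function.update a i (a i - 1))) :
    (∀ i, ∀ v, Y i (X i v) = ((q : K) ^ h i) • X i (Y i v)) ∧
    (∀ i j, i ≠ j →
      (∀ v, X i (X j v) = X j (X i v)) ∧
      (∀ v, X i (Y j v) = Y j (X i v)) ∧
      (∀ v, Y i (Y j v) = Y j (Y i v))) ∧
    (∀ i, Function.Bijective (X i) ∧ Function.Bijective (Y i)) := by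
  have hkne : ∀ i, NeZero (k i) := fun i => ⟨by
    rw [hk i]; exact (Nat.div_pos (Nat.le_of_dvd hm (hdvd i)) (hh i)).ne'⟩
  haveI := hkne
  haveI : ∀ i, Fintype (ZMod (k i)) := fun i => ZMod.fintype _
  set V := (∀ i, ZMod (k i)) → K with hV
  let B : Module.Basis (∀ i, ZMod (k i)) K V := Pi.basisFun K _
  have hB : ∀ a, B a = e K k a := fun a => by
    show Pi.basisFun K _ a = _
    rw [Pi.basisFun_apply]
    rfl
  -- key power identity
  have hkey : ∀ i (x : ZMod (k i)),
      ((q : K) ^ h i) ^ x.val = (q : K) ^ h i * ((q : K) ^ h i) ^ (x - 1).val := by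
    intro i x
    have hmul : h i * k i = m := by rw [hk i]; exact Nat.mul_div_cancel' (hdvd i)
    have hone : (q ^ h i) ^ k i = 1 := by
      rw [← pow_mul, hmul, ← hq, pow_orderOf_eq_one]
    have hdvd' : orderOf (q ^ h i) ∣ k i := orderOf_dvd_of_pow_eq_one hone
    have hmod : (x - 1).val + 1 ≡ x.val [MOD k i] := by
      rw [← ZMod.natCast_eq_natCast_iff]
      push_cast
      simp [ZMod.natCast_val, ZMod.cast_id]
    have : (q ^ h i) ^ ((x - 1).val + 1) = (q ^ h i) ^ x.val := by
      rw [pow_eq_pow_iff_modEq]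
      exact hmod.of_dvd hdvd'
    have := congrArg (Units.val) this
    push_cast at this
    rw [← this]; ring
  refine ⟨?_, ?_, ?_⟩
  · intro i
    have : Y i ∘ₗ X i = ((q : K) ^ h i) • (X i ∘ₗ Y i) := by
      apply B.ext
      intro a
      simp only [LinearMap.comp_apply, LinearMap.smul_apply, hB]
      rw [hX, map_smul, hY, hY, map_smul, hX]
      have h1 : Function.update a i (a i + 1) i = a i + 1 := Function.update_self _ _ _
      have h2 : Function.update a i (a i - 1) i = a i - 1 := Function.update_self _ _ _
      rw [h1, h2]
      simp only [add_sub_cancel_right, sub_add_cancel, Function.update_idem]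
      have h3 : Function.update a i (a i) = a := Function.update_eq_self _ _
      rw [h3, smul_smul, smul_smul, smul_smul]
      congr 1
      field_simp
      rw [hkey i (a i)]
      ring
    intro v
    have := DFunLike.congr_fun this v
    simpa using this
  · intro i j hij
    have hXX : X i ∘ₗ X j = X j ∘ₗ X i := by
      apply B.ext
      intro a
      simp only [LinearMap.comp_apply, hB]
      rw [hX, map_smul, hX, hX, map_smul, hX]
      rw [Function.update_of_ne hij.symm, Function.update_of_ne hij,
        Function.update_comm hij]
      rw [smul_smul, smul_smul, mul_comm]
    have hXY : X i ∘ₗ Y j = Y j ∘ₗ X i := by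
      apply B.ext
      intro a
      simp only [LinearMap.comp_apply, hB]
      rw [hY, map_smul, hX, hX, map_smul, hY]
      rw [Function.update_of_ne hij.symm, Function.update_of_ne hij,
        Function.update_comm hij]
      rw [smul_smul, smul_smul, mul_comm]
    have hYY : Y i ∘ₗ Y j = Y j ∘ₗ Y i := by
      apply B.ext
      intro a
      simp only [LinearMap.comp_apply, hB]
      rw [hY, map_smul, hY, hY, map_smul, hY]
      rw [Function.update_of_ne hij.symm, Function.update_of_ne hij,
        Function.update_comm hij]
      rw [smul_smul, smul_smul, mul_comm]
    exact ⟨fun v => DFunLike.congr_fun hXX v, fun v => DFunLike.congr_fun hXY v,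
      fun v => DFunLike.congr_fun hYY v⟩
  · intro i
    have hsurj : ∀ (f : V →ₗ[K] V),
        (∀ a, ∃ w, f w = e K k a) → Function.Surjective f := by
      intro f hf
      rw [← LinearMap.range_eq_top, ← top_le_iff, ← B.span_eq, Submodule.span_le]
      rintro _ ⟨a, rfl⟩
      rw [hB]
      obtain ⟨w, hw⟩ := hf a
      exact ⟨w, hw⟩
    have hXs : Function.Surjective (X i) := by
      apply hsurj
      intro a
      refine ⟨(α i)⁻¹ • e K k (Function.update a i (a i - 1)), ?_⟩
      rw [map_smul, hX, Function.update_self, sub_add_cancel, Function.update_idem,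
        Function.update_eq_self, smul_smul, inv_mul_cancel₀ (hα i), one_smul]
    have hYs : Function.Surjective (Y i) := by
      apply hsurj
      intro a
      have hc : (α i)⁻¹ * β i * ((q : K) ^ h i) ^ ((Function.update a i (a i + 1)) i - 1).val ≠ 0 := by
        apply mul_ne_zero (mul_ne_zero (inv_ne_zero (hα i)) (hβ i))
        exact pow_ne_zero _ (pow_ne_zero _ q.ne_zero)
      refine ⟨((α i)⁻¹ * β i * ((q : K) ^ h i) ^ ((Function.update a i (a i + 1)) i - 1).val)⁻¹ •
        e K k (Function.update a i (a i + 1)), ?_⟩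
      rw [map_smul, hY, smul_smul, inv_mul_cancel₀ hc, one_smul,
        Function.update_self, add_sub_cancel_right, Function.update_idem,
        Function.update_eq_self]
    exact ⟨⟨(LinearMap.injective_iff_surjective).mpr hXs, hXs⟩,
      ⟨(LinearMap.injective_iff_surjective).mpr hYs, hYs⟩⟩
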